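/- Summability of squared successive differences for DSI-HG under the weak MVI assumption (equation (thm1_5), deterministic case n = 1). Suppose (w*, δ*) is a solution of the weak MVI with parameter ρ > 0, let θ = 1, let σ, τ > 0 satisfy max{L12·(στ)^{1/2}, L11·σ} < min{1/3 − ρ(σ^{−1} + 4L11²σ), 1 − ρ(τ^{−1} + 12L12²τ)}, and set κ = max{L12·(στ)^{1/2}, L11·σ}. Let (w^k, δ^k) be a DSI-HG trajectory with parameters σ, τ, θ = 1. Then for every K ≥ 1: ((1 − 3κ − 3ρ(σ^{−1} + 4L11²σ))/(2σ)) ∑_{k=0}^{K−1} ‖w^{k+1} − w^k‖² + ((1 − κ − ρ(τ^{−1} + 12L12²τ))/(2τ)) ∑_{k=0}^{K−1} ‖δ^{k+1} − δ^k‖² ≤ (1/(2σ))‖w* − w^0‖² + (1/(2τ))‖δ* − δ^0‖². -/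

import Mathlib

set_option maxHeartbeats 1000000


open scoped RealInnerProductSpace

/-- `γ` is a subgradient of `h` at `x`. -/
def IsSubgradient {X : Type*} [NormedAddCommGroup X] [InnerProductSpace ℝ X]
    (h : X → ℝ) (x γ : X) : Prop :=
  ∀ u, h u ≥ h x + ⟪γ, u - x⟫

/-- Summability of squared successive differences for DSI-HG under the weak MVI
assumption (equation (thm1_5), deterministic case n = 1). -/
theorem dsihg_summability_squared_differences_weak_mvi
    {E F : Type*}
    [NormedAddCommGroup E] [InnerProductSpace ℝ E] [FiniteDimensional ℝ E]
    [NormedAddCommGroup F] [InnerProductSpace ℝ F] [FiniteDimensional ℝ F]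
    (φ : E → F → ℝ) (Gw : E → F → E) (Gd : E → F → F)
    (hgw : ∀ (w : E) (δ : F), HasGradientAt (fun w' => φ w' δ) (Gw w δ) w)
    (hgd : ∀ (w : E) (δ : F), HasGradientAt (fun δ' => φ w δ') (Gd w δ) δ)
    (L11 L12 L22 : ℝ) (hL11 : 0 < L11) (hL12 : 0 < L12) (hL22 : 0 < L22)
    (hLww : ∀ (w w' : E) (δ : F), ‖Gw w δ - Gw w' δ‖ ≤ L11 * ‖w - w'‖)
    (hLdw : ∀ (w w' : E) (δ : F), ‖Gd w δ - Gd w' δ‖ ≤ L12 * ‖w - w'‖)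
    (hLwd : ∀ (w : E) (δ δ' : F), ‖Gw w δ - Gw w δ'‖ ≤ L12 * ‖δ - δ'‖)
    (hLdd : ∀ (w : E) (δ δ' : F), ‖Gd w δ - Gd w δ'‖ ≤ L22 * ‖δ - δ'‖)
    (f : E → ℝ) (g : F → ℝ)
    (hf : ConvexOn ℝ Set.univ f) (hg : ConvexOn ℝ Set.univ g)
    (wstar : E) (δstar : F) (ρ : ℝ) (hρ : 0 < ρ)
    (hMVI : ∀ (w : E) (δ : F) (γf : E) (γg : F),
      IsSubgradient f w γf → IsSubgradient g δ γg →
      ⟪γf + Gw w δ, w - wstar⟫ + ⟪γg - Gd w δ, δ - δstar⟫ ≥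
        -(ρ / 2) * (‖γf + Gw w δ‖ ^ 2 + ‖γg - Gd w δ‖ ^ 2))
    (σ τ θ : ℝ) (hσ : 0 < σ) (hτ : 0 < τ) (hθ : θ = 1)
    (κ : ℝ) (hκ : κ = max (L12 * Real.sqrt (σ * τ)) (L11 * σ))
    (hstep : κ <
      min (1 / 3 - ρ * (σ⁻¹ + 4 * L11 ^ 2 * σ)) (1 - ρ * (τ⁻¹ + 12 * L12 ^ 2 * τ)))
    (w : ℕ → E) (d : ℕ → F)
    (htraj : ∀ k : ℕ, ∃ (γf : E) (γg : F),
      IsSubgradient f (w (k + 1)) γf ∧ IsSubgradient g (d (k + 1)) γg ∧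
      (0 : E) = γf + σ⁻¹ • (w (k + 1) - w k) + Gw (w k) (d k)
        + θ • (Gw (w k) (d k) - Gw (w (k - 1)) (d (k - 1))) ∧
      (0 : F) = γg + τ⁻¹ • (d (k + 1) - d k) - Gd (w (k + 1)) (d (k + 1))) :
    ∀ K : ℕ, 1 ≤ K →
      ((1 - 3 * κ - 3 * ρ * (σ⁻¹ + 4 * L11 ^ 2 * σ)) / (2 * σ)) *
          ∑ k ∈ Finset.range K, ‖w (k + 1) - w k‖ ^ 2
        + ((1 - κ - ρ * (τ⁻¹ + 12 * L12 ^ 2 * τ)) / (2 * τ)) *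
          ∑ k ∈ Finset.range K, ‖d (k + 1) - d k‖ ^ 2
      ≤ (1 / (2 * σ)) * ‖wstar - w 0‖ ^ 2 + (1 / (2 * τ)) * ‖δstar - d 0‖ ^ 2 := by
  subst hθ
  intro K _
  -- basic scalar facts about κ
  have hκpos : 0 < κ := by
    rw [hκ]; exact lt_of_lt_of_le (mul_pos hL11 hσ) (le_max_right _ _)
  have hL11κ : L11 * σ ≤ κ := hκ ▸ le_max_right _ _
  have hL12κ : L12 * Real.sqrt (σ * τ) ≤ κ := hκ ▸ le_max_left _ _
  have hL12sq : L12 ^ 2 * (σ * τ) ≤ κ ^ 2 := by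
    have h0 : 0 ≤ L12 * Real.sqrt (σ * τ) := by positivity
    have h := mul_le_mul hL12κ hL12κ h0 (le_trans h0 hL12κ)
    have h2 : (L12 * Real.sqrt (σ * τ)) * (L12 * Real.sqrt (σ * τ)) = L12 ^ 2 * (σ * τ) := by
      have := Real.mul_self_sqrt (by positivity : (0:ℝ) ≤ σ * τ)
      nlinarith only [this]
    nlinarith only [h, h2]
  have hκhalf : κ ≤ 1 / 2 := by
    have h1 : κ < 1 / 3 - ρ * (σ⁻¹ + 4 * L11 ^ 2 * σ) := lt_of_lt_of_le hstep (min_le_left _ _)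
    have h2 : 0 < ρ * (σ⁻¹ + 4 * L11 ^ 2 * σ) := by positivity
    linarith only [h1, h2, hκpos]
  -- the potential function
  set U : ℕ → ℝ := fun j =>
      σ * τ ^ 2 * ‖w j - wstar‖ ^ 2 + σ ^ 2 * τ * ‖d j - δstar‖ ^ 2
      - 2 * σ ^ 2 * τ ^ 2 * ⟪Gw (w j) (d j) - Gw (w (j - 1)) (d (j - 1)), w j - wstar⟫
      + (κ * σ * τ ^ 2 + 6 * ρ * σ ^ 2 * τ ^ 2 * L11 ^ 2) * ‖w j - w (j - 1)‖ ^ 2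
      + (κ * σ ^ 2 * τ + 6 * ρ * σ ^ 2 * τ ^ 2 * L12 ^ 2) * ‖d j - d (j - 1)‖ ^ 2
    with hU
  -- Lipschitz bound on the hybrid gradient differences
  have henorm : ∀ j : ℕ, ‖Gw (w j) (d j) - Gw (w (j - 1)) (d (j - 1))‖ ≤
      L11 * ‖w j - w (j - 1)‖ + L12 * ‖d j - d (j - 1)‖ := by
    intro j
    match j with
    | 0 => simp
    | (j + 1) =>
      simp only [Nat.add_sub_cancel]
      have hsplit : Gw (w (j + 1)) (d (j + 1)) - Gw (w j) (d j)
          = (Gw (w (j + 1)) (d (j + 1)) - Gw (w j) (d (j + 1)))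
            + (Gw (w j) (d (j + 1)) - Gw (w j) (d j)) := by abel
      calc ‖Gw (w (j + 1)) (d (j + 1)) - Gw (w j) (d j)‖
          ≤ ‖Gw (w (j + 1)) (d (j + 1)) - Gw (w j) (d (j + 1))‖
            + ‖Gw (w j) (d (j + 1)) - Gw (w j) (d j)‖ := by
            rw [hsplit]; exact norm_add_le _ _
        _ ≤ L11 * ‖w (j + 1) - w j‖ + L12 * ‖d (j + 1) - d j‖ :=
            add_le_add (hLww _ _ _) (hLwd _ _ _)
  -- nonnegativity of the potential
  have hUnonneg : ∀ j : ℕ, 0 ≤ U j := by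
    intro j
    simp only [hU]
    have hE := henorm j
    have hs : ⟪Gw (w j) (d j) - Gw (w (j - 1)) (d (j - 1)), w j - wstar⟫ ≤
        ‖Gw (w j) (d j) - Gw (w (j - 1)) (d (j - 1))‖ * ‖w j - wstar‖ := real_inner_le_norm _ _
    have hA : (0:ℝ) ≤ ‖w j - wstar‖ := norm_nonneg _
    have hB : (0:ℝ) ≤ ‖d j - δstar‖ := norm_nonneg _
    have hX : (0:ℝ) ≤ ‖w j - w (j - 1)‖ := norm_nonneg _
    have hY : (0:ℝ) ≤ ‖d j - d (j - 1)‖ := norm_nonneg _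
    set A := ‖w j - wstar‖
    set B := ‖d j - δstar‖
    set X := ‖w j - w (j - 1)‖
    set Y := ‖d j - d (j - 1)‖
    set En := ‖Gw (w j) (d j) - Gw (w (j - 1)) (d (j - 1))‖
    set s := ⟪Gw (w j) (d j) - Gw (w (j - 1)) (d (j - 1)), w j - wstar⟫
    have key1 : 2 * σ ^ 2 * τ ^ 2 * (L11 * (X * A)) ≤ (σ * τ ^ 2 / 2) * A ^ 2 + κ * σ * τ ^ 2 * X ^ 2 := by
      linarith only [mul_nonneg (mul_nonneg hσ.le (sq_nonneg τ)) (sq_nonneg (A - 2 * κ * X)),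
        mul_nonneg (mul_nonneg (mul_nonneg hσ.le (sq_nonneg τ))
          (mul_nonneg hκpos.le (by linarith : (0:ℝ) ≤ 1 - 2 * κ))) (sq_nonneg X),
        mul_nonneg (mul_nonneg (mul_nonneg hσ.le (sq_nonneg τ)) (sub_nonneg.mpr hL11κ))
          (mul_nonneg hX hA)]
    have key2 : 2 * σ ^ 2 * τ ^ 2 * (L12 * (Y * A)) ≤ (σ * τ ^ 2 / 2) * A ^ 2 + κ * σ ^ 2 * τ * Y ^ 2 := by
      linarith only [mul_nonneg hσ.le (sq_nonneg (τ * A - 2 * L12 * σ * τ * Y)),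
        mul_nonneg (sub_nonneg.mpr hL12sq)
          (mul_nonneg (mul_nonneg (sq_nonneg σ) hτ.le) (sq_nonneg Y)),
        mul_nonneg (mul_nonneg (mul_nonneg (sq_nonneg σ) hτ.le)
          (mul_nonneg hκpos.le (by linarith : (0:ℝ) ≤ 1 - 2 * κ))) (sq_nonneg Y)]
    have hmul1 : 2 * σ ^ 2 * τ ^ 2 * s ≤ 2 * σ ^ 2 * τ ^ 2 * (En * A) :=
      mul_le_mul_of_nonneg_left hs (by positivity)
    have hmul2 : 2 * σ ^ 2 * τ ^ 2 * (En * A) ≤ 2 * σ ^ 2 * τ ^ 2 * ((L11 * X + L12 * Y) * A) :=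
      mul_le_mul_of_nonneg_left (mul_le_mul_of_nonneg_right hE hA) (by positivity)
    have c1 : (0:ℝ) ≤ 6 * ρ * σ ^ 2 * τ ^ 2 * L11 ^ 2 :=
      mul_nonneg (mul_nonneg (mul_nonneg (by linarith : (0:ℝ) ≤ 6 * ρ) (sq_nonneg σ)) (sq_nonneg τ)) (sq_nonneg L11)
    have c2 : (0:ℝ) ≤ 6 * ρ * σ ^ 2 * τ ^ 2 * L12 ^ 2 :=
      mul_nonneg (mul_nonneg (mul_nonneg (by linarith : (0:ℝ) ≤ 6 * ρ) (sq_nonneg σ)) (sq_nonneg τ)) (sq_nonneg L12)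
    linarith only [hmul1, hmul2, key1, key2, mul_nonneg c1 (sq_nonneg X), mul_nonneg c2 (sq_nonneg Y),
      mul_nonneg (mul_nonneg (sq_nonneg σ) hτ.le) (sq_nonneg B)]
  -- the one-step descent inequality
  have hstepU : ∀ k : ℕ,
      U (k + 1) + (σ * τ ^ 2 * (1 - 3 * κ) - 3 * ρ * τ ^ 2 - 12 * ρ * L11 ^ 2 * σ ^ 2 * τ ^ 2) * ‖w (k + 1) - w k‖ ^ 2
        + (σ ^ 2 * τ * (1 - κ) - ρ * σ ^ 2 - 12 * ρ * L12 ^ 2 * σ ^ 2 * τ ^ 2) * ‖d (k + 1) - d k‖ ^ 2 ≤ U k := by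
    intro k
    obtain ⟨γf, γg, hγf, hγg, hAf, hAg⟩ := htraj k
    -- vector form of the updates
    have hFvec : γf + Gw (w (k + 1)) (d (k + 1)) =
        (Gw (w (k + 1)) (d (k + 1)) - Gw (w k) (d k))
          - (Gw (w k) (d k) - Gw (w (k - 1)) (d (k - 1)))
          - σ⁻¹ • (w (k + 1) - w k) := by
      rw [← sub_eq_zero]
      have hid : γf + Gw (w (k + 1)) (d (k + 1)) -
          ((Gw (w (k + 1)) (d (k + 1)) - Gw (w k) (d k))
            - (Gw (w k) (d k) - Gw (w (k - 1)) (d (k - 1)))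
            - σ⁻¹ • (w (k + 1) - w k))
          = γf + σ⁻¹ • (w (k + 1) - w k) + Gw (w k) (d k)
            + (1:ℝ) • (Gw (w k) (d k) - Gw (w (k - 1)) (d (k - 1))) := by
        rw [one_smul]; module
      rw [hid]; exact hAf.symm
    have hGvec : γg - Gd (w (k + 1)) (d (k + 1)) = -(τ⁻¹ • (d (k + 1) - d k)) := by
      rw [← sub_eq_zero]
      have hid : γg - Gd (w (k + 1)) (d (k + 1)) - (-(τ⁻¹ • (d (k + 1) - d k)))
          = γg + τ⁻¹ • (d (k + 1) - d k) - Gd (w (k + 1)) (d (k + 1)) := by module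
      rw [hid]; exact hAg.symm
    -- inner product expansions
    have hIP1 : ⟪γf + Gw (w (k + 1)) (d (k + 1)), w (k + 1) - wstar⟫ =
        ⟪Gw (w (k + 1)) (d (k + 1)) - Gw (w k) (d k), w (k + 1) - wstar⟫
        - ⟪Gw (w k) (d k) - Gw (w (k - 1)) (d (k - 1)), w k - wstar⟫
        - ⟪Gw (w k) (d k) - Gw (w (k - 1)) (d (k - 1)), w (k + 1) - w k⟫
        - σ⁻¹ * ⟪w (k + 1) - w k, w (k + 1) - wstar⟫ := by
      rw [hFvec, inner_sub_left, inner_sub_left, real_inner_smul_left]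
      have h2 : ⟪Gw (w k) (d k) - Gw (w (k - 1)) (d (k - 1)), w (k + 1) - wstar⟫
          = ⟪Gw (w k) (d k) - Gw (w (k - 1)) (d (k - 1)), w k - wstar⟫
            + ⟪Gw (w k) (d k) - Gw (w (k - 1)) (d (k - 1)), w (k + 1) - w k⟫ := by
        rw [← inner_add_right]
        congr 1
        abel
      rw [h2]; ring
    have hIP2 : ⟪γg - Gd (w (k + 1)) (d (k + 1)), d (k + 1) - δstar⟫ =
        -(τ⁻¹ * ⟪d (k + 1) - d k, d (k + 1) - δstar⟫) := by
      rw [hGvec, inner_neg_left, real_inner_smul_left]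
    have hWid : ⟪w (k + 1) - w k, w (k + 1) - wstar⟫ =
        (‖w (k + 1) - wstar‖ ^ 2 + ‖w (k + 1) - w k‖ ^ 2 - ‖w k - wstar‖ ^ 2) / 2 := by
      have h := norm_sub_sq_real (w (k + 1) - wstar) (w (k + 1) - w k)
      have hx : (w (k + 1) - wstar) - (w (k + 1) - w k) = w k - wstar := by abel
      rw [hx] at h
      have h2 : ⟪w (k + 1) - wstar, w (k + 1) - w k⟫ = ⟪w (k + 1) - w k, w (k + 1) - wstar⟫ :=
        real_inner_comm _ _
      linarith only [h, h2]
    have hDid : ⟪d (k + 1) - d k, d (k + 1) - δstar⟫ =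
        (‖d (k + 1) - δstar‖ ^ 2 + ‖d (k + 1) - d k‖ ^ 2 - ‖d k - δstar‖ ^ 2) / 2 := by
      have h := norm_sub_sq_real (d (k + 1) - δstar) (d (k + 1) - d k)
      have hx : (d (k + 1) - δstar) - (d (k + 1) - d k) = d k - δstar := by abel
      rw [hx] at h
      have h2 : ⟪d (k + 1) - δstar, d (k + 1) - d k⟫ = ⟪d (k + 1) - d k, d (k + 1) - δstar⟫ :=
        real_inner_comm _ _
      linarith only [h, h2]
    have hGnorm : ‖γg - Gd (w (k + 1)) (d (k + 1))‖ = τ⁻¹ * ‖d (k + 1) - d k‖ := by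
      rw [hGvec, norm_neg, norm_smul, Real.norm_eq_abs, abs_of_pos (inv_pos.mpr hτ)]
    have hFle : ‖γf + Gw (w (k + 1)) (d (k + 1))‖ ≤
        ‖Gw (w (k + 1)) (d (k + 1)) - Gw (w k) (d k)‖
        + ‖Gw (w k) (d k) - Gw (w (k - 1)) (d (k - 1))‖ + σ⁻¹ * ‖w (k + 1) - w k‖ := by
      rw [hFvec]
      have h1 := norm_sub_le
        ((Gw (w (k + 1)) (d (k + 1)) - Gw (w k) (d k))
          - (Gw (w k) (d k) - Gw (w (k - 1)) (d (k - 1)))) (σ⁻¹ • (w (k + 1) - w k))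
      have h2 := norm_sub_le (Gw (w (k + 1)) (d (k + 1)) - Gw (w k) (d k))
        (Gw (w k) (d k) - Gw (w (k - 1)) (d (k - 1)))
      have h3 : ‖σ⁻¹ • (w (k + 1) - w k)‖ = σ⁻¹ * ‖w (k + 1) - w k‖ := by
        rw [norm_smul, Real.norm_eq_abs, abs_of_pos (inv_pos.mpr hσ)]
      linarith only [h1, h2, h3]
    -- the weak MVI instance
    have hmvi := hMVI (w (k + 1)) (d (k + 1)) γf γg hγf hγg
    rw [hIP1, hIP2, hGnorm, hWid, hDid] at hmvi
    -- Lipschitz bounds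
    have hE1 := henorm (k + 1)
    simp only [Nat.add_sub_cancel] at hE1
    have hE0 := henorm k
    -- Cauchy-Schwarz for the cross term
    have ht : -(⟪Gw (w k) (d k) - Gw (w (k - 1)) (d (k - 1)), w (k + 1) - w k⟫) ≤
        ‖Gw (w k) (d k) - Gw (w (k - 1)) (d (k - 1))‖ * ‖w (k + 1) - w k‖ := by
      have habs := abs_real_inner_le_norm
        (Gw (w k) (d k) - Gw (w (k - 1)) (d (k - 1))) (w (k + 1) - w k)
      exact le_trans (neg_le_abs _) habs
    -- nonnegativity facts (before abbreviations)
    have ha : (0:ℝ) ≤ ‖w (k + 1) - w k‖ := norm_nonneg _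
    have hb : (0:ℝ) ≤ ‖d (k + 1) - d k‖ := norm_nonneg _
    have ham : (0:ℝ) ≤ ‖w k - w (k - 1)‖ := norm_nonneg _
    have hbm : (0:ℝ) ≤ ‖d k - d (k - 1)‖ := norm_nonneg _
    have hE1n : (0:ℝ) ≤ ‖Gw (w (k + 1)) (d (k + 1)) - Gw (w k) (d k)‖ := norm_nonneg _
    have hE0n : (0:ℝ) ≤ ‖Gw (w k) (d k) - Gw (w (k - 1)) (d (k - 1))‖ := norm_nonneg _
    have hFnn : (0:ℝ) ≤ ‖γf + Gw (w (k + 1)) (d (k + 1))‖ := norm_nonneg _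
    simp only [hU, Nat.add_sub_cancel]
    -- abbreviations
    set a := ‖w (k + 1) - w k‖
    set b := ‖d (k + 1) - d k‖
    set am := ‖w k - w (k - 1)‖
    set bm := ‖d k - d (k - 1)‖
    set A0 := ‖w k - wstar‖
    set A1 := ‖w (k + 1) - wstar‖
    set B0 := ‖d k - δstar‖
    set B1 := ‖d (k + 1) - δstar‖
    set E1 := ‖Gw (w (k + 1)) (d (k + 1)) - Gw (w k) (d k)‖
    set E0 := ‖Gw (w k) (d k) - Gw (w (k - 1)) (d (k - 1))‖
    set Fn := ‖γf + Gw (w (k + 1)) (d (k + 1))‖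
    set s1 := ⟪Gw (w (k + 1)) (d (k + 1)) - Gw (w k) (d k), w (k + 1) - wstar⟫
    set s0 := ⟪Gw (w k) (d k) - Gw (w (k - 1)) (d (k - 1)), w k - wstar⟫
    set tt := ⟪Gw (w k) (d k) - Gw (w (k - 1)) (d (k - 1)), w (k + 1) - w k⟫
    -- polynomial form of the MVI inequality
    have h2 := mul_nonneg (show (0:ℝ) ≤ 2 * σ ^ 2 * τ ^ 2 by positivity) (sub_nonneg.mpr hmvi)
    have e1 : 2 * σ ^ 2 * τ ^ 2 * (σ⁻¹ * ((A1 ^ 2 + a ^ 2 - A0 ^ 2) / 2))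
        = σ * τ ^ 2 * (A1 ^ 2 + a ^ 2 - A0 ^ 2) := by
      field_simp
    have e2 : 2 * σ ^ 2 * τ ^ 2 * (τ⁻¹ * ((B1 ^ 2 + b ^ 2 - B0 ^ 2) / 2))
        = σ ^ 2 * τ * (B1 ^ 2 + b ^ 2 - B0 ^ 2) := by
      field_simp
    have e3 : ρ * (σ ^ 2 * τ ^ 2 * (τ⁻¹ * b) ^ 2) = ρ * (σ ^ 2 * b ^ 2) := by
      field_simp
    have F1 : σ * τ ^ 2 * (A0 ^ 2 - A1 ^ 2 - a ^ 2) + σ ^ 2 * τ * (B0 ^ 2 - B1 ^ 2 - b ^ 2)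
        + 2 * σ ^ 2 * τ ^ 2 * s1 - 2 * σ ^ 2 * τ ^ 2 * s0 - 2 * σ ^ 2 * τ ^ 2 * tt
        + ρ * σ ^ 2 * τ ^ 2 * Fn ^ 2 + ρ * σ ^ 2 * b ^ 2 ≥ 0 := by
      linarith only [h2, e1, e2, e3]
    -- bound on the cross term
    have hm1 : 2 * σ ^ 2 * τ ^ 2 * (-tt) ≤ 2 * σ ^ 2 * τ ^ 2 * (E0 * a) :=
      mul_le_mul_of_nonneg_left ht (by positivity)
    have hm2 : 2 * σ ^ 2 * τ ^ 2 * (E0 * a) ≤ 2 * σ ^ 2 * τ ^ 2 * ((L11 * am + L12 * bm) * a) :=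
      mul_le_mul_of_nonneg_left (mul_le_mul_of_nonneg_right hE0 ha) (by positivity)
    have part1 : 2 * σ ^ 2 * τ ^ 2 * (L11 * (am * a)) ≤ κ * σ * τ ^ 2 * am ^ 2 + κ * σ * τ ^ 2 * a ^ 2 := by
      linarith only [mul_nonneg (mul_nonneg hσ.le (sq_nonneg τ))
          (mul_nonneg hκpos.le (sq_nonneg (am - a))),
        mul_nonneg (mul_nonneg (mul_nonneg hσ.le (sq_nonneg τ)) (sub_nonneg.mpr hL11κ))
          (mul_nonneg ham ha)]
    have part2 : 2 * σ ^ 2 * τ ^ 2 * (L12 * (bm * a)) ≤ κ * σ * τ ^ 2 * a ^ 2 + κ * σ ^ 2 * τ * bm ^ 2 := by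
      nlinarith only [mul_nonneg hσ.le (sq_nonneg (κ * τ * a - L12 * σ * τ * bm)),
        mul_nonneg (sub_nonneg.mpr hL12sq)
          (mul_nonneg (mul_nonneg (sq_nonneg σ) hτ.le) (sq_nonneg bm)), hκpos,
        mul_pos hσ hτ]
    have F2 : 2 * σ ^ 2 * τ ^ 2 * (-tt) ≤ κ * σ * τ ^ 2 * am ^ 2 + 2 * κ * σ * τ ^ 2 * a ^ 2
        + κ * σ ^ 2 * τ * bm ^ 2 := by
      linarith only [hm1, hm2, part1, part2]
    -- bound on the hybrid gradient norm
    have hS : (0:ℝ) ≤ E1 + E0 + σ⁻¹ * a :=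
      add_nonneg (add_nonneg hE1n hE0n) (mul_nonneg (inv_nonneg.mpr hσ.le) ha)
    have h1 : Fn ^ 2 ≤ 3 * E1 ^ 2 + 3 * E0 ^ 2 + 3 * (σ⁻¹ * a) ^ 2 := by
      nlinarith only [mul_nonneg (sub_nonneg.mpr hFle) hS, mul_nonneg (sub_nonneg.mpr hFle) hFnn,
        sq_nonneg (E1 - E0), sq_nonneg (E1 - σ⁻¹ * a), sq_nonneg (E0 - σ⁻¹ * a)]
    have hq2 : E1 ^ 2 ≤ 2 * (L11 * a) ^ 2 + 2 * (L12 * b) ^ 2 := by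
      nlinarith only [mul_nonneg (sub_nonneg.mpr hE1)
          (add_nonneg (mul_nonneg hL11.le ha) (mul_nonneg hL12.le hb)),
        mul_nonneg (sub_nonneg.mpr hE1) hE1n, sq_nonneg (L11 * a - L12 * b)]
    have hq3 : E0 ^ 2 ≤ 2 * (L11 * am) ^ 2 + 2 * (L12 * bm) ^ 2 := by
      nlinarith only [mul_nonneg (sub_nonneg.mpr hE0)
          (add_nonneg (mul_nonneg hL11.le ham) (mul_nonneg hL12.le hbm)),
        mul_nonneg (sub_nonneg.mpr hE0) hE0n, sq_nonneg (L11 * am - L12 * bm)]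
    have h4 := mul_le_mul_of_nonneg_left h1
      (show (0:ℝ) ≤ ρ * σ ^ 2 * τ ^ 2 from
        mul_nonneg (mul_nonneg hρ.le (sq_nonneg σ)) (sq_nonneg τ))
    have h5 := mul_le_mul_of_nonneg_left hq2
      (show (0:ℝ) ≤ 3 * ρ * σ ^ 2 * τ ^ 2 from
        mul_nonneg (mul_nonneg (mul_nonneg (by norm_num) hρ.le) (sq_nonneg σ)) (sq_nonneg τ))
    have h6 := mul_le_mul_of_nonneg_left hq3
      (show (0:ℝ) ≤ 3 * ρ * σ ^ 2 * τ ^ 2 from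
        mul_nonneg (mul_nonneg (mul_nonneg (by norm_num) hρ.le) (sq_nonneg σ)) (sq_nonneg τ))
    have e4 : ρ * σ ^ 2 * τ ^ 2 * (3 * (σ⁻¹ * a) ^ 2) = 3 * ρ * τ ^ 2 * a ^ 2 := by
      field_simp
    have F3 : ρ * σ ^ 2 * τ ^ 2 * Fn ^ 2 ≤ 3 * ρ * τ ^ 2 * a ^ 2
        + 6 * ρ * σ ^ 2 * τ ^ 2 * (L11 ^ 2 * a ^ 2) + 6 * ρ * σ ^ 2 * τ ^ 2 * (L12 ^ 2 * b ^ 2)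
        + 6 * ρ * σ ^ 2 * τ ^ 2 * (L11 ^ 2 * am ^ 2) + 6 * ρ * σ ^ 2 * τ ^ 2 * (L12 ^ 2 * bm ^ 2) := by
      linarith only [h4, h5, h6, e4]
    linarith only [F1, F2, F3]
  -- telescoping
  have htel : ∀ N : ℕ, U N + ∑ k ∈ Finset.range N,
      ((σ * τ ^ 2 * (1 - 3 * κ) - 3 * ρ * τ ^ 2 - 12 * ρ * L11 ^ 2 * σ ^ 2 * τ ^ 2) * ‖w (k + 1) - w k‖ ^ 2
        + (σ ^ 2 * τ * (1 - κ) - ρ * σ ^ 2 - 12 * ρ * L12 ^ 2 * σ ^ 2 * τ ^ 2) * ‖d (k + 1) - d k‖ ^ 2)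
      ≤ U 0 := by
    intro N
    induction N with
    | zero => simp
    | succ n ih =>
      rw [Finset.sum_range_succ]
      have := hstepU n
      linarith only [ih, this]
  have hU0 : U 0 = σ * τ ^ 2 * ‖w 0 - wstar‖ ^ 2 + σ ^ 2 * τ * ‖d 0 - δstar‖ ^ 2 := by
    simp only [hU, Nat.zero_sub, sub_self, inner_zero_left, norm_zero]
    ring
  have hsum : (σ * τ ^ 2 * (1 - 3 * κ) - 3 * ρ * τ ^ 2 - 12 * ρ * L11 ^ 2 * σ ^ 2 * τ ^ 2) *
        (∑ k ∈ Finset.range K, ‖w (k + 1) - w k‖ ^ 2)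
      + (σ ^ 2 * τ * (1 - κ) - ρ * σ ^ 2 - 12 * ρ * L12 ^ 2 * σ ^ 2 * τ ^ 2) *
        (∑ k ∈ Finset.range K, ‖d (k + 1) - d k‖ ^ 2)
      ≤ σ * τ ^ 2 * ‖w 0 - wstar‖ ^ 2 + σ ^ 2 * τ * ‖d 0 - δstar‖ ^ 2 := by
    have h := htel K
    have h0 := hUnonneg K
    rw [Finset.sum_add_distrib, ← Finset.mul_sum, ← Finset.mul_sum] at h
    linarith only [h, h0, hU0.le, hU0.ge]
  -- conversion back to the stated form
  rw [show ‖wstar - w 0‖ = ‖w 0 - wstar‖ from norm_sub_rev _ _,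
    show ‖δstar - d 0‖ = ‖d 0 - δstar‖ from norm_sub_rev _ _]
  have hc : (0:ℝ) < 2 * σ ^ 2 * τ ^ 2 := by positivity
  have h1 : (1 - 3 * κ - 3 * ρ * (σ⁻¹ + 4 * L11 ^ 2 * σ)) / (2 * σ)
      = (σ * τ ^ 2 * (1 - 3 * κ) - 3 * ρ * τ ^ 2 - 12 * ρ * L11 ^ 2 * σ ^ 2 * τ ^ 2) / (2 * σ ^ 2 * τ ^ 2) := by
    field_simp; ring
  have h2 : (1 - κ - ρ * (τ⁻¹ + 12 * L12 ^ 2 * τ)) / (2 * τ)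
      = (σ ^ 2 * τ * (1 - κ) - ρ * σ ^ 2 - 12 * ρ * L12 ^ 2 * σ ^ 2 * τ ^ 2) / (2 * σ ^ 2 * τ ^ 2) := by
    field_simp; ring
  have h3 : 1 / (2 * σ) * ‖w 0 - wstar‖ ^ 2 + 1 / (2 * τ) * ‖d 0 - δstar‖ ^ 2
      = (σ * τ ^ 2 * ‖w 0 - wstar‖ ^ 2 + σ ^ 2 * τ * ‖d 0 - δstar‖ ^ 2) / (2 * σ ^ 2 * τ ^ 2) := by
    field_simp
  rw [h1, h2, h3, div_mul_eq_mul_div, div_mul_eq_mul_div, ← add_div]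
  exact div_le_div_of_nonneg_right hsum hc.le
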